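/- Every Cantor subset K of ℝ contains a Cantor subset K₀ of packing dimension zero (indeed of upper Minkowski dimension zero). -/

import Mathlib

open Set Filter Metric
open scoped Topology

/-- The minimal number of `ε`-balls needed to cover `s` (covering number). -/
noncomputable def covNum (s : Set ℝ) (ε : ℝ) : ℕ :=
  sInf {m : ℕ | ∃ t : Finset ℝ, t.card ≤ m ∧ s ⊆ ⋃ x ∈ t, Metric.ball x ε}

/-- The upper Minkowski (box-counting) dimension of a bounded set,
computed along the dyadic scales `2⁻ⁿ`. -/
noncomputable def upperMinkDim (s : Set ℝ) : ℝ :=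
  Filter.limsup
    (fun n : ℕ => Real.log (covNum s (1 / 2 ^ n)) / Real.log (2 ^ n)) atTop


/-- Every nonempty open subset of Cantor space has two distinct points. -/
lemma cantor_two_points {S : Set (ℕ → Bool)} (hS : IsOpen S) (hne : S.Nonempty) :
    ∃ a b, a ∈ S ∧ b ∈ S ∧ a ≠ b := by
  obtain ⟨z, hz⟩ := hne
  obtain ⟨I, u, hu, hsub⟩ := isOpen_pi_iff.1 hS z hz
  set m : ℕ := I.sup id + 1 with hm
  have hmI : m ∉ I := by
    intro h
    have : m ≤ I.sup id := Finset.le_sup (f := id) h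
    omega
  refine ⟨z, Function.update z m (!z m), hz, ?_, ?_⟩
  · apply hsub
    intro i hi
    have : i ≠ m := fun h => hmI (h ▸ hi)
    rw [Function.update_of_ne this]
    exact (hu i hi).2
  · intro h
    have := congrFun h m
    simp at this

/-- All pairwise distances in `Q` are at most `δ`. -/
def SmallSet (Q : Set ℝ) (δ : ℝ) : Prop := ∀ p ∈ Q, ∀ q ∈ Q, dist p q ≤ δ

/-- `Q` is the image in `ℝ` of a nonempty clopen subset of `K`. -/
def GoodPiece (K Q : Set ℝ) : Prop :=
  ∃ S : Set (↥K), IsClopen S ∧ S.Nonempty ∧ Q = Subtype.val '' S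

lemma GoodPiece.nonempty {K Q : Set ℝ} (h : GoodPiece K Q) : Q.Nonempty := by
  obtain ⟨S, _, ⟨s, hs⟩, rfl⟩ := h
  exact ⟨s, s, hs, rfl⟩

lemma GoodPiece.subset {K Q : Set ℝ} (h : GoodPiece K Q) : Q ⊆ K := by
  obtain ⟨S, _, _, rfl⟩ := h
  rintro x ⟨s, -, rfl⟩
  exact s.2

lemma GoodPiece.isCompact {K Q : Set ℝ} [CompactSpace ↥K] (h : GoodPiece K Q) :
    IsCompact Q := by
  obtain ⟨S, hS, _, rfl⟩ := h
  exact (hS.1.isCompact).image continuous_subtype_val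

lemma goodPiece_self {K : Set ℝ} (hne : K.Nonempty) : GoodPiece K K := by
  refine ⟨Set.univ, isClopen_univ, ?_, ?_⟩
  · obtain ⟨x, hx⟩ := hne
    exact ⟨⟨x, hx⟩, trivial⟩
  · simp [Set.image_univ, Subtype.range_coe]

/-- Core splitting lemma. -/
lemma goodPiece_split {K : Set ℝ} (e : ↥K ≃ₜ (ℕ → Bool)) {Q : Set ℝ}
    (hQ : GoodPiece K Q) {δ : ℝ} (hδ : 0 < δ) :
    ∃ Q₀ Q₁ : Set ℝ, GoodPiece K Q₀ ∧ GoodPiece K Q₁ ∧ Q₀ ⊆ Q ∧ Q₁ ⊆ Q ∧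
      Q₀ ∩ Q₁ = ∅ ∧ SmallSet Q₀ δ ∧ SmallSet Q₁ δ := by
  haveI : CompactSpace ↥K := e.symm.compactSpace
  haveI : TotallyDisconnectedSpace ↥K := by
    constructor
    apply e.isEmbedding.isTotallyDisconnected
    exact isTotallyDisconnected_of_totallyDisconnectedSpace _
  obtain ⟨S, hScl, hSne, rfl⟩ := hQ
  -- two distinct points of S
  obtain ⟨p, q, hp, hq, hpq⟩ : ∃ p q : ↥K, p ∈ S ∧ q ∈ S ∧ p ≠ q := by
    obtain ⟨a, b, ha, hb, hab⟩ := cantor_two_points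
      (hScl.2.preimage e.symm.continuous) (⟨e hSne.some, by simp [hSne.some_mem]⟩)
    exact ⟨e.symm a, e.symm b, ha, hb, fun h => hab (e.symm.injective h)⟩
  set r : ℝ := min (δ / 2) (dist p q / 2) with hr
  have hrpos : 0 < r := lt_min (by linarith) (by have := dist_pos.2 hpq; linarith)
  obtain ⟨S₀, hS₀cl, hpS₀, hS₀⟩ := compact_exists_isClopen_in_isOpen
    (hScl.2.inter isOpen_ball) ⟨hp, mem_ball_self hrpos⟩
  obtain ⟨S₁, hS₁cl, hqS₁, hS₁⟩ := compact_exists_isClopen_in_isOpen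
    (hScl.2.inter isOpen_ball) ⟨hq, mem_ball_self hrpos⟩
  refine ⟨Subtype.val '' S₀, Subtype.val '' S₁,
    ⟨S₀, hS₀cl, ⟨p, hpS₀⟩, rfl⟩, ⟨S₁, hS₁cl, ⟨q, hqS₁⟩, rfl⟩,
    Set.image_mono (fun x hx => (hS₀ hx).1), Set.image_mono (fun x hx => (hS₁ hx).1),
    ?_, ?_, ?_⟩
  · ext x
    simp only [Set.mem_inter_iff, Set.mem_image, Set.mem_empty_iff_false, iff_false]
    rintro ⟨⟨a, ha, rfl⟩, ⟨b, hb, hab⟩⟩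
    have hba : b = a := Subtype.coe_injective hab
    subst hba
    have h1 : dist b p < r := (hS₀ ha).2
    have h2 : dist b q < r := (hS₁ hb).2
    have : dist p q ≤ dist p b + dist b q := dist_triangle _ _ _
    rw [dist_comm p b] at this
    have hr2 : r ≤ dist p q / 2 := min_le_right _ _
    linarith
  · rintro x ⟨a, ha, rfl⟩ y ⟨b, hb, rfl⟩
    have h1 : dist a p < r := (hS₀ ha).2
    have h2 : dist b p < r := (hS₀ hb).2
    have : dist (a : ℝ) b = dist a b := (Subtype.dist_eq a b).symm
    have htri : dist a b ≤ dist a p + dist p b := dist_triangle _ _ _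
    rw [dist_comm p b] at htri
    have hr1 : r ≤ δ / 2 := min_le_left _ _
    rw [this]
    linarith
  · rintro x ⟨a, ha, rfl⟩ y ⟨b, hb, rfl⟩
    have h1 : dist a q < r := (hS₁ ha).2
    have h2 : dist b q < r := (hS₁ hb).2
    have : dist (a : ℝ) b = dist a b := (Subtype.dist_eq a b).symm
    have htri : dist a b ≤ dist a q + dist q b := dist_triangle _ _ _
    rw [dist_comm q b] at htri
    have hr1 : r ≤ δ / 2 := min_le_left _ _
    rw [this]
    linarith

lemma tendsto_sqrt_succ_div : Tendsto (fun n : ℕ => ((Nat.sqrt n : ℝ) + 1) / n) atTop (𝓝 0) := by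
  have hs : Tendsto (fun n : ℕ => (Nat.sqrt n : ℝ)) atTop atTop := by
    apply tendsto_natCast_atTop_atTop.comp
    refine tendsto_atTop_atTop.2 fun b => ⟨b * b, fun n hn => ?_⟩
    exact Nat.le_sqrt.2 hn
  have h2 : Tendsto (fun n : ℕ => 2 / (Nat.sqrt n : ℝ)) atTop (𝓝 0) :=
    Tendsto.div_atTop tendsto_const_nhds hs
  apply tendsto_of_tendsto_of_tendsto_of_le_of_le' tendsto_const_nhds h2
  · filter_upwards [eventually_ge_atTop 1] with n hn
    positivity
  · filter_upwards [eventually_ge_atTop 1] with n hn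
    have hs1 : 1 ≤ Nat.sqrt n := Nat.le_sqrt.2 (by omega)
    have hsn : Nat.sqrt n * Nat.sqrt n ≤ n := Nat.sqrt_le n
    have h0 : (0:ℝ) < (Nat.sqrt n : ℝ) := by exact_mod_cast hs1
    have hn0 : (0:ℝ) < (n:ℝ) := by exact_mod_cast hn
    rw [div_le_div_iff₀ hn0 h0]
    have : ((Nat.sqrt n : ℝ) + 1) * (Nat.sqrt n) ≤ 2 * n := by
      have h1 : ((Nat.sqrt n : ℝ)) * (Nat.sqrt n) ≤ n := by exact_mod_cast hsn
      have h2 : ((Nat.sqrt n : ℝ)) ≤ n := by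
        exact_mod_cast Nat.sqrt_le_self n
      nlinarith
    linarith

set_option maxHeartbeats 1000000 in
theorem stmt18 (K : Set ℝ) (hK : Nonempty (↥K ≃ₜ (ℕ → Bool))) :
    ∃ K₀ : Set ℝ, K₀ ⊆ K ∧ Nonempty (↥K₀ ≃ₜ (ℕ → Bool)) ∧ upperMinkDim K₀ = 0 := by
  obtain ⟨e⟩ := hK
  haveI : CompactSpace ↥K := e.symm.compactSpace
  have hKne : K.Nonempty := ⟨(e.symm fun _ => false : ↥K), (e.symm fun _ => false).2⟩
  -- splitting function
  have hsplit : ∀ Q : Set ℝ, GoodPiece K Q → ∀ k : ℕ, ∃ P : Bool → Set ℝ,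
      (∀ b, GoodPiece K (P b)) ∧ (∀ b, P b ⊆ Q) ∧ (P false ∩ P true = ∅) ∧
      (∀ b, SmallSet (P b) ((1/2 : ℝ) ^ (k * k + 1))) := by
    intro Q hQ k
    obtain ⟨Q₀, Q₁, h₀, h₁, hs₀, hs₁, hdis, hm₀, hm₁⟩ :=
      goodPiece_split e hQ (δ := (1/2 : ℝ) ^ (k * k + 1)) (by positivity)
    refine ⟨fun b => bif b then Q₁ else Q₀, ?_, ?_, ?_, ?_⟩
    · rintro (_ | _); exacts [h₀, h₁]
    · rintro (_ | _); exacts [hs₀, hs₁]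
    · exact hdis
    · rintro (_ | _); exacts [hm₀, hm₁]
  choose! P hP1 hP2 hP3 hP4 using hsplit
  -- the tree of pieces
  set C : List Bool → Set ℝ :=
    fun σ => σ.rec K (fun b σ' ih => P ih (σ'.length + 1) b) with hCdef
  have hCs : ∀ (b : Bool) (σ : List Bool), C (b :: σ) = P (C σ) (σ.length + 1) b :=
    fun _ _ => rfl
  have hG : ∀ σ, GoodPiece K (C σ) := by
    intro σ
    induction σ with
    | nil => exact goodPiece_self hKne
    | cons b σ ih => rw [hCs]; exact hP1 _ ih _ b
  have hsub : ∀ (b : Bool) (σ), C (b :: σ) ⊆ C σ := by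
    intro b σ; rw [hCs]; exact hP2 _ (hG σ) _ b
  have hdisj : ∀ σ, C (false :: σ) ∩ C (true :: σ) = ∅ := by
    intro σ; rw [hCs, hCs]; exact hP3 _ (hG σ) _
  have hsmall : ∀ (b : Bool) (σ : List Bool),
      SmallSet (C (b :: σ)) ((1/2 : ℝ) ^ ((σ.length + 1) * (σ.length + 1) + 1)) := by
    intro b σ; rw [hCs]; exact hP4 _ (hG σ) _ b
  -- branches
  set L : (ℕ → Bool) → ℕ → List Bool :=
    fun x k => (List.ofFn fun i : Fin k => x i).reverse with hLdef
  have hL0 : ∀ x, L x 0 = [] := fun x => by simp [hLdef]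
  have hLlen : ∀ x k, (L x k).length = k := fun x k => by simp [hLdef]
  have hLs : ∀ x k, L x (k + 1) = x k :: L x k := by
    intro x k
    simp only [hLdef, List.ofFn_succ', Fin.coe_castSucc, Fin.val_last,
      List.concat_eq_append, List.reverse_append, List.reverse_cons, List.reverse_nil,
      List.nil_append, List.cons_append]
  have hLcongr : ∀ (x y : ℕ → Bool) (k : ℕ), (∀ i < k, x i = y i) → L x k = L y k := by
    intro x y k h
    simp only [hLdef]
    congr 1
    exact congrArg List.ofFn (funext fun i => h i i.2)
  have hmono : ∀ x k, C (L x (k + 1)) ⊆ C (L x k) := by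
    intro x k; rw [hLs]; exact hsub _ _
  -- the limit point map
  have hne' : ∀ x, (⋂ k, C (L x k)).Nonempty := by
    intro x
    exact IsCompact.nonempty_iInter_of_sequence_nonempty_isCompact_isClosed
      (fun k => C (L x k)) (hmono x) (fun k => (hG _).nonempty)
      ((hG (L x 0)).isCompact) (fun k => (hG _).isCompact.isClosed)
  set f : (ℕ → Bool) → ℝ := fun x => (hne' x).some with hfdef
  have hf : ∀ x k, f x ∈ C (L x k) := fun x k => Set.mem_iInter.1 (hne' x).some_mem k
  have hfK : ∀ x, f x ∈ K := by
    intro x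
    have := hf x 0
    rwa [hL0] at this
  -- injectivity
  have hinj : Function.Injective f := by
    intro x y hxy
    by_contra hne2
    have hex : ∃ i, x i ≠ y i := Function.ne_iff.1 hne2
    set k := Nat.find hex with hkdef
    have hk : x k ≠ y k := Nat.find_spec hex
    have hagree : ∀ i < k, x i = y i := fun i hi => not_not.1 (Nat.find_min hex hi)
    have hLeq : L x k = L y k := hLcongr x y k hagree
    have h1 : f x ∈ C (x k :: L x k) := by rw [← hLs]; exact hf x (k + 1)
    have h2 : f x ∈ C (y k :: L x k) := by
      rw [hLeq, ← hLs, hxy]; exact hf y (k + 1)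
    have hmem : f x ∈ C (false :: L x k) ∩ C (true :: L x k) := by
      cases hxk : x k with
      | false =>
        cases hyk : y k with
        | false => exact absurd (hxk.trans hyk.symm) hk
        | true => rw [hxk] at h1; rw [hyk] at h2; exact ⟨h1, h2⟩
      | true =>
        cases hyk : y k with
        | false => rw [hxk] at h1; rw [hyk] at h2; exact ⟨h2, h1⟩
        | true => exact absurd (hxk.trans hyk.symm) hk
    rw [hdisj] at hmem
    exact hmem
  -- continuity
  have hcont : Continuous f := by
    rw [continuous_iff_continuousAt]
    intro x
    rw [ContinuousAt, Metric.tendsto_nhds]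
    intro ε hε
    obtain ⟨k, hkε⟩ : ∃ k : ℕ, (1/2 : ℝ) ^ k < ε :=
      exists_pow_lt_of_lt_one hε (by norm_num)
    have hδε : (1/2 : ℝ) ^ ((k + 1) * (k + 1) + 1) < ε := by
      refine lt_of_le_of_lt ?_ hkε
      exact pow_le_pow_of_le_one (by norm_num) (by norm_num) (by nlinarith)
    have hopen : IsOpen {y : ℕ → Bool | ∀ i : Fin (k + 1), y i = x i} := by
      have : {y : ℕ → Bool | ∀ i : Fin (k + 1), y i = x i} =
          ⋂ i : Fin (k + 1), (fun y : ℕ → Bool => y i) ⁻¹' {x i} := by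
        ext; simp
      rw [this]
      exact isOpen_iInter_of_finite fun i =>
        (continuous_apply (i : ℕ)).isOpen_preimage _ (isOpen_discrete _)
    have hxmem : x ∈ {y : ℕ → Bool | ∀ i : Fin (k + 1), y i = x i} := fun i => rfl
    filter_upwards [hopen.mem_nhds hxmem] with y hy
    have hLeq : L y (k + 1) = L x (k + 1) :=
      hLcongr y x (k + 1) fun i hi => hy ⟨i, hi⟩
    have h1 : f y ∈ C (x k :: L x k) := by
      rw [← hLs]; rw [← hLeq]; exact hf y (k + 1)
    have h2 : f x ∈ C (x k :: L x k) := by rw [← hLs]; exact hf x (k + 1)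
    have hsm := hsmall (x k) (L x k)
    rw [hLlen] at hsm
    exact lt_of_le_of_lt (hsm _ h1 _ h2) hδε
  -- the subset
  refine ⟨Set.range f, ?_, ?_, ?_⟩
  · rintro _ ⟨x, rfl⟩; exact hfK x
  · have hEc : Continuous fun x => (⟨f x, Set.mem_range_self x⟩ : ↥(Set.range f)) :=
      hcont.subtype_mk _
    exact ⟨(Continuous.homeoOfEquivCompactToT2 (f := Equiv.ofInjective f hinj) hEc).symm⟩
  · -- dimension zero
    have hKone : (Set.range f).Nonempty := Set.range_nonempty f
    have hmemS : ∀ n : ℕ, 2 ^ (Nat.sqrt n + 1) ∈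
        {m : ℕ | ∃ t : Finset ℝ, t.card ≤ m ∧
          Set.range f ⊆ ⋃ x ∈ t, Metric.ball x (1 / 2 ^ n)} := by
      intro n
      set k := Nat.sqrt n + 1 with hkdef
      refine ⟨Finset.image
        (fun v : Fin k → Bool => ((hG ((List.ofFn v).reverse)).nonempty).some)
        Finset.univ, ?_, ?_⟩
      · refine le_trans Finset.card_image_le ?_
        simp
      · rintro _ ⟨x, rfl⟩
        have hvmem : (fun i : Fin k => x i) ∈ (Finset.univ : Finset (Fin k → Bool)) :=
          Finset.mem_univ _
        refine Set.mem_biUnion (Finset.mem_image_of_mem _ hvmem) ?_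
        have hσ : (List.ofFn fun i : Fin k => x i).reverse = L x k := rfl
        rw [hσ]
        have h1 : f x ∈ C (L x k) := hf x k
        have h2 := ((hG (L x k)).nonempty).some_mem
        have hsm : SmallSet (C (L x k)) ((1/2 : ℝ) ^ (k * k + 1)) := by
          have := hsmall (x (Nat.sqrt n)) (L x (Nat.sqrt n))
          rw [hLlen, ← hLs] at this
          exact this
        have hd := hsm _ h1 _ h2
        have hn : n < k * k + 1 := by
          have h := Nat.lt_succ_sqrt n
          rw [Nat.succ_eq_add_one] at h
          simp only [hkdef]
          omega
        have hlt : ((1:ℝ)/2) ^ (k * k + 1) < 1 / 2 ^ n := by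
          have := pow_lt_pow_right_of_lt_one₀ (a := (1/2 : ℝ)) (by norm_num) (by norm_num) hn
          calc ((1:ℝ)/2) ^ (k * k + 1) < (1/2 : ℝ) ^ n := this
            _ = 1 / 2 ^ n := by rw [div_pow, one_pow]
        exact Metric.mem_ball.2 (lt_of_le_of_lt hd hlt)
    have hub : ∀ n, covNum (Set.range f) (1 / 2 ^ n) ≤ 2 ^ (Nat.sqrt n + 1) :=
      fun n => Nat.sInf_le (hmemS n)
    have hlb : ∀ n, 1 ≤ covNum (Set.range f) (1 / 2 ^ n) := by
      intro n
      rcases Nat.eq_zero_or_pos (covNum (Set.range f) (1 / 2 ^ n)) with h | h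
      · exfalso
        rcases (Nat.sInf_eq_zero.1 h) with h0 | hemp
        · obtain ⟨t, ht0, hcov⟩ := h0
          have : t = ∅ := Finset.card_eq_zero.1 (le_antisymm ht0 (Nat.zero_le _))
          subst this
          simp only [Finset.notMem_empty, Set.iUnion_of_empty, Set.iUnion_empty] at hcov
          exact hKone.not_subset_empty hcov
        · exact absurd hemp (Set.nonempty_iff_ne_empty.1 ⟨_, hmemS n⟩)
      · exact h
    -- the limit
    have hterm : Tendsto (fun n : ℕ =>
        Real.log (covNum (Set.range f) (1 / 2 ^ n)) / Real.log (2 ^ n)) atTop (𝓝 0) := by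
      apply tendsto_of_tendsto_of_tendsto_of_le_of_le' tendsto_const_nhds
        tendsto_sqrt_succ_div
      · filter_upwards with n
        apply div_nonneg
        · exact Real.log_nonneg (by exact_mod_cast hlb n)
        · exact Real.log_nonneg (one_le_pow₀ (by norm_num))
      · filter_upwards [eventually_ge_atTop 1] with n hn
        set k := Nat.sqrt n + 1 with hkdef
        have hlogc : Real.log (covNum (Set.range f) (1 / 2 ^ n)) ≤ (k : ℝ) * Real.log 2 := by
          have h1 : (covNum (Set.range f) (1 / 2 ^ n) : ℝ) ≤ (2 : ℝ) ^ k := by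
            exact_mod_cast hub n
          calc Real.log (covNum (Set.range f) (1 / 2 ^ n)) ≤ Real.log ((2:ℝ) ^ k) :=
                Real.log_le_log (by exact_mod_cast hlb n) h1
            _ = (k : ℝ) * Real.log 2 := by rw [Real.log_pow]
        have hlog2 : Real.log ((2:ℝ) ^ n) = (n : ℝ) * Real.log 2 := by rw [Real.log_pow]
        have hpos : (0:ℝ) < (n : ℝ) * Real.log 2 := by
          apply mul_pos
          · exact_mod_cast hn
          · exact Real.log_pos (by norm_num)
        rw [hlog2]
        calc Real.log (covNum (Set.range f) (1 / 2 ^ n)) / ((n : ℝ) * Real.log 2)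
            ≤ ((k : ℝ) * Real.log 2) / ((n : ℝ) * Real.log 2) := by
              gcongr
          _ = (k : ℝ) / (n : ℝ) := by
              rw [mul_div_mul_right _ _ (ne_of_gt (Real.log_pos (by norm_num)))]
          _ = ((Nat.sqrt n : ℝ) + 1) / n := by push_cast [hkdef]; ring_nf
    rw [upperMinkDim]
    exact hterm.limsup_eq
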